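/- Let N, M ≥ 2, let e₀, e₁ be orthonormal vectors in C^N and f₀, f₁ orthonormal vectors in C^M, and let |ψ⟩ = (e₀ ⊗ f₁ + e₁ ⊗ f₀)/√2 be a maximally entangled two-dimensional state. Then for every p with 0 < p ≤ 1, the mixed state ρ = p |ψ⟩⟨ψ| + (1 − p) |e₁ ⊗ f₁⟩⟨e₁ ⊗ f₁| on C^N ⊗ C^M is entangled. Consequently, the tripartite state |φ⟩ = (β₁|0, N, M⟩ + β₂|1, 0, M⟩ + β₃|1, N, 0⟩)/√α (with all β_i ≠ 0) is robust against the loss of the qubit. -/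

import Mathlib

open scoped Kronecker ComplexConjugate ComplexOrder Matrix

noncomputable section

/-- A density matrix: positive semidefinite with trace 1. -/
def IsDensity {n : Type} [Fintype n] [DecidableEq n] (ρ : Matrix n n ℂ) : Prop :=
  ρ.PosSemidef ∧ ρ.trace = 1

/-- Separability of a bipartite density matrix: a finite convex combination of
tensor (Kronecker) products of density matrices. -/
def Separable {n m : Type} [Fintype n] [DecidableEq n] [Fintype m] [DecidableEq m]
    (ρ : Matrix (n × m) (n × m) ℂ) : Prop :=
  ∃ (L : ℕ) (p : Fin L → ℝ) (A : Fin L → Matrix n n ℂ) (B : Fin L → Matrix m m ℂ),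
    (∀ i, 0 < p i) ∧ (∑ i, p i) = 1 ∧ (∀ i, IsDensity (A i)) ∧ (∀ i, IsDensity (B i)) ∧
    ρ = ∑ i, (p i : ℂ) • (A i ⊗ₖ B i)

/-- Partial trace over the first tensor factor. -/
def ptraceFst {k n : Type} [Fintype k] (ρ : Matrix (k × n) (k × n) ℂ) : Matrix n n ℂ :=
  fun i j => ∑ a, ρ (a, i) (a, j)

/-- Partial trace over the second tensor factor. -/
def ptraceSnd {n m : Type} [Fintype m] (ρ : Matrix (n × m) (n × m) ℂ) : Matrix n n ℂ :=
  fun i j => ∑ b, ρ (i, b) (j, b)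

/-- The rank-one projection |ψ⟩⟨ψ|. -/
def proj {n : Type} (ψ : n → ℂ) : Matrix n n ℂ := Matrix.vecMulVec ψ (star ψ)

/-- Partial transpose with respect to the first tensor factor. -/
def ptransposeFst {n m : Type} (ρ : Matrix (n × m) (n × m) ℂ) : Matrix (n × m) (n × m) ℂ :=
  fun x y => ρ (y.1, x.2) (x.1, y.2)

section Aux

variable {n m : Type} [Fintype n] [DecidableEq n] [Fintype m] [DecidableEq m]

lemma aux_kron_conjT (A : Matrix n n ℂ) (B : Matrix m m ℂ) :
    (A ⊗ₖ B)ᴴ = Aᴴ ⊗ₖ Bᴴ := by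
  ext x y
  simp [Matrix.conjTranspose_apply, Matrix.kroneckerMap_apply]

lemma aux_psd_kron {A : Matrix n n ℂ} {B : Matrix m m ℂ}
    (hA : A.PosSemidef) (hB : B.PosSemidef) : (A ⊗ₖ B).PosSemidef := by
  exact hA.kronecker hB

lemma aux_psd_smul {A : Matrix n n ℂ} (hA : A.PosSemidef) {r : ℝ} (hr : 0 ≤ r) :
    ((r : ℂ) • A).PosSemidef := by
  refine Matrix.PosSemidef.of_dotProduct_mulVec_nonneg ?_ ?_
  · unfold Matrix.IsHermitian
    rw [Matrix.conjTranspose_smul, hA.1]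
    congr 1
    simp
  · intro x
    have h := hA.dotProduct_mulVec_nonneg x
    rw [Matrix.smul_mulVec, dotProduct_smul, smul_eq_mul]
    rw [Complex.nonneg_iff] at h ⊢
    constructor
    · have : ((r : ℂ) * (dotProduct (star x) (A *ᵥ x))).re
          = r * (dotProduct (star x) (A *ᵥ x)).re := by
        simp [Complex.mul_re]
      rw [this]
      exact mul_nonneg hr h.1
    · have : ((r : ℂ) * (dotProduct (star x) (A *ᵥ x))).im
          = r * (dotProduct (star x) (A *ᵥ x)).im := by
        simp [Complex.mul_im]
      rw [this, ← h.2, mul_zero]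

lemma aux_ptrans_kron (A : Matrix n n ℂ) (B : Matrix m m ℂ) :
    ptransposeFst (A ⊗ₖ B) = Aᵀ ⊗ₖ B := by
  ext x y
  simp [ptransposeFst, Matrix.kroneckerMap_apply]

set_option maxHeartbeats 1000000 in
lemma aux_not_sep (ρ : Matrix (n × m) (n × m) ℂ) (w : n × m → ℂ)
    (hw : ¬ (0 : ℂ) ≤ dotProduct (star w) (ptransposeFst ρ *ᵥ w)) :
    ¬ Separable ρ := by
  rintro ⟨L, p, A, B, hp, -, hA, hB, rfl⟩
  refine hw ?_
  have hlin : ptransposeFst (∑ i, (p i : ℂ) • (A i ⊗ₖ B i))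
      = ∑ i, (p i : ℂ) • ptransposeFst (A i ⊗ₖ B i) := by
    ext x y
    simp only [ptransposeFst, Matrix.sum_apply, Matrix.smul_apply]
  rw [hlin]
  have hpsd : (∑ i, (p i : ℂ) • ptransposeFst (A i ⊗ₖ B i)).PosSemidef := by
    apply Finset.sum_induction _ _ (fun a b ha hb => ha.add hb) Matrix.PosSemidef.zero
    intro i _
    rw [aux_ptrans_kron]
    exact aux_psd_smul (aux_psd_kron (hA i).1.transpose (hB i).1) (hp i).le
  exact hpsd.dotProduct_mulVec_nonneg w

end Aux

lemma aux_factor {N M : ℕ} (c d : ℂ) (A C S1 : Fin N → ℂ) (B D S2 : Fin M → ℂ) :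
    ∑ x : Fin N × Fin M, (c * (A x.1 * B x.2) + d * (C x.1 * D x.2)) * (S1 x.1 * S2 x.2)
      = c * ((∑ a, A a * S1 a) * (∑ i, B i * S2 i))
        + d * ((∑ a, C a * S1 a) * (∑ i, D i * S2 i)) := by
  rw [Fintype.sum_prod_type, Finset.sum_mul_sum, Finset.sum_mul_sum, Finset.mul_sum,
    Finset.mul_sum, ← Finset.sum_add_distrib]
  refine Finset.sum_congr rfl fun a _ => ?_
  rw [Finset.mul_sum, Finset.mul_sum, ← Finset.sum_add_distrib]
  refine Finset.sum_congr rfl fun i _ => ?_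
  ring

lemma aux_double {N M : ℕ} (c : ℂ) (F G : Fin N × Fin M → ℂ) :
    (∑ x : Fin N × Fin M, ∑ y : Fin N × Fin M, c * (F x * G y))
      = c * ((∑ x, F x) * (∑ y, G y)) := by
  rw [Finset.sum_mul_sum, Finset.mul_sum]
  refine Finset.sum_congr rfl fun x _ => ?_
  rw [Finset.mul_sum]

lemma aux_key {N M : ℕ} (e0 e1 : Fin N → ℂ) (f0 f1 : Fin M → ℂ)
    (hE00 : ∑ a, conj (e0 a) * e0 a = 1) (hE11 : ∑ a, conj (e1 a) * e1 a = 1)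
    (hE01 : ∑ a, conj (e0 a) * e1 a = 0)
    (hF00 : ∑ i, conj (f0 i) * f0 i = 1) (hF11 : ∑ i, conj (f1 i) * f1 i = 1)
    (hF01 : ∑ i, conj (f0 i) * f1 i = 0)
    (μ ν lam : ℂ) (hμ : μ ≠ 0) (hν : ν ≠ 0)
    (ρ : Matrix (Fin N × Fin M) (Fin N × Fin M) ℂ)
    (hρ : ∀ x y, ρ x y =
      (μ * (e0 x.1 * f1 x.2) + ν * (e1 x.1 * f0 x.2)) *
        conj (μ * (e0 y.1 * f1 y.2) + ν * (e1 y.1 * f0 y.2)) +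
      (lam * (e1 x.1 * f1 x.2)) * conj (lam * (e1 y.1 * f1 y.2))) :
    ¬ Separable ρ := by
  -- derived orthonormality relations
  have hE10 : ∑ a, conj (e1 a) * e0 a = 0 := by
    have h := congrArg (starRingEnd ℂ) hE01
    simpa [map_sum, _root_.map_mul, mul_comm] using h
  have hF10 : ∑ i, conj (f1 i) * f0 i = 0 := by
    have h := congrArg (starRingEnd ℂ) hF01
    simpa [map_sum, _root_.map_mul, mul_comm] using h
  have hcE00 : ∑ a, e0 a * conj (e0 a) = 1 := by simpa [mul_comm] using hE00
  have hcE11 : ∑ a, e1 a * conj (e1 a) = 1 := by simpa [mul_comm] using hE11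
  have hcE01 : ∑ a, e0 a * conj (e1 a) = 0 := by simpa [mul_comm] using hE10
  have hcE10 : ∑ a, e1 a * conj (e0 a) = 0 := by simpa [mul_comm] using hE01
  have hcF00 : ∑ i, f0 i * conj (f0 i) = 1 := by simpa [mul_comm] using hF00
  have hcF11 : ∑ i, f1 i * conj (f1 i) = 1 := by simpa [mul_comm] using hF11
  have hcF01 : ∑ i, f0 i * conj (f1 i) = 0 := by simpa [mul_comm] using hF10
  have hcF10 : ∑ i, f1 i * conj (f0 i) = 0 := by simpa [mul_comm] using hF01
  obtain ⟨r, hr⟩ : ∃ r : ℝ, r = -(‖lam‖ ^ 2 + 1) / (‖μ‖ ^ 2 * ‖ν‖ ^ 2) := ⟨_, rfl⟩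
  obtain ⟨z, hz⟩ : ∃ z : ℂ, z = (r : ℂ) * (conj μ * ν) := ⟨_, rfl⟩
  obtain ⟨w, hwdef⟩ : ∃ w : Fin N × Fin M → ℂ,
      w = fun x => z * (conj (e0 x.1) * f0 x.2) + conj (e1 x.1) * f1 x.2 := ⟨_, rfl⟩
  refine aux_not_sep ρ w ?_
  -- the eight basic dot products
  have hA1 : ∑ x : Fin N × Fin M, conj (w x) * (conj (e0 x.1) * f1 x.2) = 0 := by
    calc ∑ x : Fin N × Fin M, conj (w x) * (conj (e0 x.1) * f1 x.2)
        = ∑ x : Fin N × Fin M, (conj z * (e0 x.1 * conj (f0 x.2))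
            + 1 * (e1 x.1 * conj (f1 x.2))) * (conj (e0 x.1) * f1 x.2) :=
          Finset.sum_congr rfl fun x _ => by
            simp only [hwdef, map_add, _root_.map_mul, Complex.conj_conj]; ring
      _ = conj z * ((∑ a, e0 a * conj (e0 a)) * (∑ i, conj (f0 i) * f1 i))
            + 1 * ((∑ a, e1 a * conj (e0 a)) * (∑ i, conj (f1 i) * f1 i)) :=
          aux_factor (conj z) 1 e0 e1 (fun a => conj (e0 a))
            (fun i => conj (f0 i)) (fun i => conj (f1 i)) f1
      _ = 0 := by rw [hcE00, hcE10, hF01, hF11]; ring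
  have hA2 : ∑ x : Fin N × Fin M, conj (w x) * (conj (e1 x.1) * f1 x.2) = 1 := by
    calc ∑ x : Fin N × Fin M, conj (w x) * (conj (e1 x.1) * f1 x.2)
        = ∑ x : Fin N × Fin M, (conj z * (e0 x.1 * conj (f0 x.2))
            + 1 * (e1 x.1 * conj (f1 x.2))) * (conj (e1 x.1) * f1 x.2) :=
          Finset.sum_congr rfl fun x _ => by
            simp only [hwdef, map_add, _root_.map_mul, Complex.conj_conj]; ring
      _ = conj z * ((∑ a, e0 a * conj (e1 a)) * (∑ i, conj (f0 i) * f1 i))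
            + 1 * ((∑ a, e1 a * conj (e1 a)) * (∑ i, conj (f1 i) * f1 i)) :=
          aux_factor (conj z) 1 e0 e1 (fun a => conj (e1 a))
            (fun i => conj (f0 i)) (fun i => conj (f1 i)) f1
      _ = 1 := by rw [hcE01, hcE11, hF01, hF11]; ring
  have hA3 : ∑ x : Fin N × Fin M, conj (w x) * (conj (e0 x.1) * f0 x.2) = conj z := by
    calc ∑ x : Fin N × Fin M, conj (w x) * (conj (e0 x.1) * f0 x.2)
        = ∑ x : Fin N × Fin M, (conj z * (e0 x.1 * conj (f0 x.2))
            + 1 * (e1 x.1 * conj (f1 x.2))) * (conj (e0 x.1) * f0 x.2) :=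
          Finset.sum_congr rfl fun x _ => by
            simp only [hwdef, map_add, _root_.map_mul, Complex.conj_conj]; ring
      _ = conj z * ((∑ a, e0 a * conj (e0 a)) * (∑ i, conj (f0 i) * f0 i))
            + 1 * ((∑ a, e1 a * conj (e0 a)) * (∑ i, conj (f1 i) * f0 i)) :=
          aux_factor (conj z) 1 e0 e1 (fun a => conj (e0 a))
            (fun i => conj (f0 i)) (fun i => conj (f1 i)) f0
      _ = conj z := by rw [hcE00, hcE10, hF00, hF10]; ring
  have hA4 : ∑ x : Fin N × Fin M, conj (w x) * (conj (e1 x.1) * f0 x.2) = 0 := by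
    calc ∑ x : Fin N × Fin M, conj (w x) * (conj (e1 x.1) * f0 x.2)
        = ∑ x : Fin N × Fin M, (conj z * (e0 x.1 * conj (f0 x.2))
            + 1 * (e1 x.1 * conj (f1 x.2))) * (conj (e1 x.1) * f0 x.2) :=
          Finset.sum_congr rfl fun x _ => by
            simp only [hwdef, map_add, _root_.map_mul, Complex.conj_conj]; ring
      _ = conj z * ((∑ a, e0 a * conj (e1 a)) * (∑ i, conj (f0 i) * f0 i))
            + 1 * ((∑ a, e1 a * conj (e1 a)) * (∑ i, conj (f1 i) * f0 i)) :=
          aux_factor (conj z) 1 e0 e1 (fun a => conj (e1 a))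
            (fun i => conj (f0 i)) (fun i => conj (f1 i)) f0
      _ = 0 := by rw [hcE01, hcE11, hF00, hF10]; ring
  have hB1 : ∑ y : Fin N × Fin M, (e0 y.1 * conj (f1 y.2)) * w y = 0 := by
    calc ∑ y : Fin N × Fin M, (e0 y.1 * conj (f1 y.2)) * w y
        = ∑ y : Fin N × Fin M, (z * (conj (e0 y.1) * f0 y.2)
            + 1 * (conj (e1 y.1) * f1 y.2)) * (e0 y.1 * conj (f1 y.2)) :=
          Finset.sum_congr rfl fun y _ => by simp only [hwdef]; ring
      _ = z * ((∑ a, conj (e0 a) * e0 a) * (∑ i, f0 i * conj (f1 i)))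
            + 1 * ((∑ a, conj (e1 a) * e0 a) * (∑ i, f1 i * conj (f1 i))) :=
          aux_factor z 1 (fun a => conj (e0 a)) (fun a => conj (e1 a)) e0
            f0 f1 (fun i => conj (f1 i))
      _ = 0 := by rw [hE00, hE10, hcF01, hcF11]; ring
  have hB2 : ∑ y : Fin N × Fin M, (e0 y.1 * conj (f0 y.2)) * w y = z := by
    calc ∑ y : Fin N × Fin M, (e0 y.1 * conj (f0 y.2)) * w y
        = ∑ y : Fin N × Fin M, (z * (conj (e0 y.1) * f0 y.2)
            + 1 * (conj (e1 y.1) * f1 y.2)) * (e0 y.1 * conj (f0 y.2)) :=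
          Finset.sum_congr rfl fun y _ => by simp only [hwdef]; ring
      _ = z * ((∑ a, conj (e0 a) * e0 a) * (∑ i, f0 i * conj (f0 i)))
            + 1 * ((∑ a, conj (e1 a) * e0 a) * (∑ i, f1 i * conj (f0 i))) :=
          aux_factor z 1 (fun a => conj (e0 a)) (fun a => conj (e1 a)) e0
            f0 f1 (fun i => conj (f0 i))
      _ = z := by rw [hE00, hE10, hcF00, hcF10]; ring
  have hB3 : ∑ y : Fin N × Fin M, (e1 y.1 * conj (f1 y.2)) * w y = 1 := by
    calc ∑ y : Fin N × Fin M, (e1 y.1 * conj (f1 y.2)) * w y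
        = ∑ y : Fin N × Fin M, (z * (conj (e0 y.1) * f0 y.2)
            + 1 * (conj (e1 y.1) * f1 y.2)) * (e1 y.1 * conj (f1 y.2)) :=
          Finset.sum_congr rfl fun y _ => by simp only [hwdef]; ring
      _ = z * ((∑ a, conj (e0 a) * e1 a) * (∑ i, f0 i * conj (f1 i)))
            + 1 * ((∑ a, conj (e1 a) * e1 a) * (∑ i, f1 i * conj (f1 i))) :=
          aux_factor z 1 (fun a => conj (e0 a)) (fun a => conj (e1 a)) e1
            f0 f1 (fun i => conj (f1 i))
      _ = 1 := by rw [hE01, hE11, hcF01, hcF11]; ring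
  have hB4 : ∑ y : Fin N × Fin M, (e1 y.1 * conj (f0 y.2)) * w y = 0 := by
    calc ∑ y : Fin N × Fin M, (e1 y.1 * conj (f0 y.2)) * w y
        = ∑ y : Fin N × Fin M, (z * (conj (e0 y.1) * f0 y.2)
            + 1 * (conj (e1 y.1) * f1 y.2)) * (e1 y.1 * conj (f0 y.2)) :=
          Finset.sum_congr rfl fun y _ => by simp only [hwdef]; ring
      _ = z * ((∑ a, conj (e0 a) * e1 a) * (∑ i, f0 i * conj (f0 i)))
            + 1 * ((∑ a, conj (e1 a) * e1 a) * (∑ i, f1 i * conj (f0 i))) :=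
          aux_factor z 1 (fun a => conj (e0 a)) (fun a => conj (e1 a)) e1
            f0 f1 (fun i => conj (f0 i))
      _ = 0 := by rw [hE01, hE11, hcF00, hcF10]; ring
  -- the quadratic form of the partial transpose at w
  have hQ : dotProduct (star w) (ptransposeFst ρ *ᵥ w)
      = μ * conj μ * ((∑ x : Fin N × Fin M, conj (w x) * (conj (e0 x.1) * f1 x.2))
            * (∑ y : Fin N × Fin M, (e0 y.1 * conj (f1 y.2)) * w y))
        + μ * conj ν * ((∑ x : Fin N × Fin M, conj (w x) * (conj (e1 x.1) * f1 x.2))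
            * (∑ y : Fin N × Fin M, (e0 y.1 * conj (f0 y.2)) * w y))
        + ν * conj μ * ((∑ x : Fin N × Fin M, conj (w x) * (conj (e0 x.1) * f0 x.2))
            * (∑ y : Fin N × Fin M, (e1 y.1 * conj (f1 y.2)) * w y))
        + ν * conj ν * ((∑ x : Fin N × Fin M, conj (w x) * (conj (e1 x.1) * f0 x.2))
            * (∑ y : Fin N × Fin M, (e1 y.1 * conj (f0 y.2)) * w y))
        + lam * conj lam * ((∑ x : Fin N × Fin M, conj (w x) * (conj (e1 x.1) * f1 x.2))
            * (∑ y : Fin N × Fin M, (e1 y.1 * conj (f1 y.2)) * w y)) := by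
    calc dotProduct (star w) (ptransposeFst ρ *ᵥ w)
        = ∑ x : Fin N × Fin M, ∑ y : Fin N × Fin M,
            conj (w x) * (ρ (y.1, x.2) (x.1, y.2) * w y) := by
          simp only [dotProduct, Matrix.mulVec, ptransposeFst, Pi.star_apply,
            RCLike.star_def, Finset.mul_sum]
      _ = ∑ x : Fin N × Fin M, ∑ y : Fin N × Fin M,
            (μ * conj μ * ((conj (w x) * (conj (e0 x.1) * f1 x.2)) * ((e0 y.1 * conj (f1 y.2)) * w y))
            + μ * conj ν * ((conj (w x) * (conj (e1 x.1) * f1 x.2)) * ((e0 y.1 * conj (f0 y.2)) * w y))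
            + ν * conj μ * ((conj (w x) * (conj (e0 x.1) * f0 x.2)) * ((e1 y.1 * conj (f1 y.2)) * w y))
            + ν * conj ν * ((conj (w x) * (conj (e1 x.1) * f0 x.2)) * ((e1 y.1 * conj (f0 y.2)) * w y))
            + lam * conj lam * ((conj (w x) * (conj (e1 x.1) * f1 x.2)) * ((e1 y.1 * conj (f1 y.2)) * w y))) :=
          Finset.sum_congr rfl fun x _ => Finset.sum_congr rfl fun y _ => by
            rw [hρ]
            simp only [map_add, _root_.map_mul]
            ring
      _ = _ := by
          simp only [Finset.sum_add_distrib]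
          rw [aux_double, aux_double, aux_double, aux_double, aux_double]
  rw [hQ, hA1, hA2, hA3, hA4, hB1, hB2, hB3, hB4]
  -- evaluate the resulting number
  have hμn : ‖μ‖ ≠ 0 := norm_ne_zero_iff.mpr hμ
  have hνn : ‖ν‖ ≠ 0 := norm_ne_zero_iff.mpr hν
  have hre : r * (‖μ‖ ^ 2 * ‖ν‖ ^ 2) = -(‖lam‖ ^ 2 + 1) := by
    rw [hr]
    exact div_mul_cancel₀ _ (by positivity)
  have hcz : conj z = (r : ℂ) * (μ * conj ν) := by
    rw [hz]
    simp only [_root_.map_mul, Complex.conj_ofReal, Complex.conj_conj]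
  have hval : μ * conj μ * (0 * 0) + μ * conj ν * (1 * z) + ν * conj μ * (conj z * 1)
      + ν * conj ν * (0 * 0) + lam * conj lam * (1 * 1)
      = ((-(‖lam‖ ^ 2) - 2 : ℝ) : ℂ) := by
    calc μ * conj μ * (0 * 0) + μ * conj ν * (1 * z) + ν * conj μ * (conj z * 1)
          + ν * conj ν * (0 * 0) + lam * conj lam * (1 * 1)
        = (r : ℂ) * ((μ * conj μ) * (ν * conj ν)) * 2 + lam * conj lam := by
          rw [hcz, hz]; ring
      _ = ((r * (‖μ‖ ^ 2 * ‖ν‖ ^ 2) * 2 + ‖lam‖ ^ 2 : ℝ) : ℂ) := by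
          have hnc : ∀ u : ℂ, u * conj u = ((‖u‖ ^ 2 : ℝ) : ℂ) := fun u => by
            rw [Complex.mul_conj, Complex.normSq_eq_norm_sq]
          rw [hnc, hnc, hnc]
          push_cast
          ring
      _ = ((-(‖lam‖ ^ 2) - 2 : ℝ) : ℂ) := by
          have : r * (‖μ‖ ^ 2 * ‖ν‖ ^ 2) * 2 + ‖lam‖ ^ 2 = -(‖lam‖ ^ 2) - 2 := by
            rw [hre]; ring
          rw [this]
  rw [hval, Complex.zero_le_real]
  intro h
  nlinarith [sq_nonneg ‖lam‖]


/-- For orthonormal `e₀, e₁ ∈ ℂ^N`, `f₀, f₁ ∈ ℂ^M` and the maximally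
entangled state `|ψ⟩ = (e₀ ⊗ f₁ + e₁ ⊗ f₀)/√2`, the state
`ρ = p |ψ⟩⟨ψ| + (1 − p)|e₁ ⊗ f₁⟩⟨e₁ ⊗ f₁|` is entangled for every `0 < p ≤ 1`.
Consequently the tripartite state
`|φ⟩ = (β₁|0⟩⊗e₁⊗f₁ + β₂|1⟩⊗e₀⊗f₁ + β₃|1⟩⊗e₁⊗f₀)/√α` (all `β_i ≠ 0`,
`α = |β₁|² + |β₂|² + |β₃|²`) is robust against the loss of the qubit. -/
theorem stmt8 (N M : ℕ) (hN : 2 ≤ N) (hM : 2 ≤ M)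
    (e0 e1 : Fin N → ℂ) (f0 f1 : Fin M → ℂ)
    (he0 : ∑ i, ‖e0 i‖ ^ 2 = 1) (he1 : ∑ i, ‖e1 i‖ ^ 2 = 1)
    (hf0 : ∑ j, ‖f0 j‖ ^ 2 = 1) (hf1 : ∑ j, ‖f1 j‖ ^ 2 = 1)
    (he : ∑ i, conj (e0 i) * e1 i = 0) (hf : ∑ j, conj (f0 j) * f1 j = 0)
    (ψ : Fin N × Fin M → ℂ)
    (hψ : ψ = fun x => ((Real.sqrt 2 : ℂ))⁻¹ * (e0 x.1 * f1 x.2 + e1 x.1 * f0 x.2)) :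
    (∀ p : ℝ, 0 < p → p ≤ 1 →
      ¬ Separable ((p : ℂ) • proj ψ +
        ((1 - p : ℝ) : ℂ) • proj (fun x : Fin N × Fin M => e1 x.1 * f1 x.2))) ∧
    (∀ β1 β2 β3 : ℂ, β1 ≠ 0 → β2 ≠ 0 → β3 ≠ 0 →
      ¬ Separable (ptraceFst (proj (fun x : Fin 2 × (Fin N × Fin M) =>
        ((Real.sqrt (‖β1‖ ^ 2 + ‖β2‖ ^ 2 + ‖β3‖ ^ 2) : ℂ))⁻¹ *
          (β1 * (if x.1 = 0 then 1 else 0) * e1 x.2.1 * f1 x.2.2 +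
           β2 * (if x.1 = 1 then 1 else 0) * e0 x.2.1 * f1 x.2.2 +
           β3 * (if x.1 = 1 then 1 else 0) * e1 x.2.1 * f0 x.2.2))))) := by
  have norm_conv : ∀ {K : ℕ} (g : Fin K → ℂ), (∑ i, ‖g i‖ ^ 2 = 1) →
      ∑ i, conj (g i) * g i = 1 := by
    intro K g hg
    calc ∑ i, conj (g i) * g i = ∑ i, ((‖g i‖ ^ 2 : ℝ) : ℂ) :=
          Finset.sum_congr rfl fun i _ => by
            rw [mul_comm, Complex.mul_conj, Complex.normSq_eq_norm_sq]
      _ = ((∑ i, ‖g i‖ ^ 2 : ℝ) : ℂ) := by push_cast; ring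
      _ = 1 := by rw [hg]; norm_num
  have hE00 := norm_conv e0 he0
  have hE11 := norm_conv e1 he1
  have hF00 := norm_conv f0 hf0
  have hF11 := norm_conv f1 hf1
  constructor
  · intro p hp0 hp1
    have hp2 : (0 : ℝ) ≤ p / 2 := by linarith
    have h1p : (0 : ℝ) ≤ 1 - p := by linarith
    have hμ0 : ((Real.sqrt (p / 2) : ℝ) : ℂ) ≠ 0 :=
      Complex.ofReal_ne_zero.mpr (ne_of_gt (Real.sqrt_pos.mpr (by linarith)))
    refine aux_key e0 e1 f0 f1 hE00 hE11 he hF00 hF11 hf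
      ((Real.sqrt (p / 2) : ℝ) : ℂ) ((Real.sqrt (p / 2) : ℝ) : ℂ)
      ((Real.sqrt (1 - p) : ℝ) : ℂ) hμ0 hμ0 _ ?_
    intro x y
    have h2 : Real.sqrt 2 * Real.sqrt 2 = 2 := Real.mul_self_sqrt (by norm_num)
    have hs : Real.sqrt (p / 2) * Real.sqrt (p / 2)
        = p * (Real.sqrt 2)⁻¹ * (Real.sqrt 2)⁻¹ := by
      rw [Real.mul_self_sqrt hp2, mul_assoc, ← mul_inv, h2]
      ring
    have f1' : ((Real.sqrt (p / 2) : ℝ) : ℂ) * ((Real.sqrt (p / 2) : ℝ) : ℂ)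
        = ((p : ℝ) : ℂ) * (((Real.sqrt 2 : ℝ) : ℂ))⁻¹ * (((Real.sqrt 2 : ℝ) : ℂ))⁻¹ := by
      exact_mod_cast congrArg Complex.ofReal hs
    have f2' : ((Real.sqrt (1 - p) : ℝ) : ℂ) * ((Real.sqrt (1 - p) : ℝ) : ℂ)
        = (((1 - p) : ℝ) : ℂ) := by
      rw [← Complex.ofReal_mul, Real.mul_self_sqrt h1p]
    simp only [Matrix.add_apply, Matrix.smul_apply, proj, Matrix.vecMulVec_apply,
      Pi.star_apply, RCLike.star_def, smul_eq_mul, hψ]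
    simp only [_root_.map_add, _root_.map_mul, map_inv₀, Complex.conj_ofReal]
    linear_combination
      (-((e0 x.1 * f1 x.2 + e1 x.1 * f0 x.2) *
        (conj (e0 y.1) * conj (f1 y.2) + conj (e1 y.1) * conj (f0 y.2)))) * f1'
      + (-((e1 x.1 * f1 x.2) * (conj (e1 y.1) * conj (f1 y.2)))) * f2'
  · intro β1 β2 β3 h1 h2 h3
    have hb1 : (0 : ℝ) < ‖β1‖ := norm_pos_iff.mpr h1
    have hα : (0 : ℝ) < ‖β1‖ ^ 2 + ‖β2‖ ^ 2 + ‖β3‖ ^ 2 := by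
      have := pow_pos hb1 2
      nlinarith [sq_nonneg ‖β2‖, sq_nonneg ‖β3‖]
    have hc : ((Real.sqrt (‖β1‖ ^ 2 + ‖β2‖ ^ 2 + ‖β3‖ ^ 2) : ℝ) : ℂ)⁻¹ ≠ 0 :=
      inv_ne_zero (Complex.ofReal_ne_zero.mpr (ne_of_gt (Real.sqrt_pos.mpr hα)))
    refine aux_key e0 e1 f0 f1 hE00 hE11 he hF00 hF11 hf
      (((Real.sqrt (‖β1‖ ^ 2 + ‖β2‖ ^ 2 + ‖β3‖ ^ 2) : ℝ) : ℂ)⁻¹ * β2)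
      (((Real.sqrt (‖β1‖ ^ 2 + ‖β2‖ ^ 2 + ‖β3‖ ^ 2) : ℝ) : ℂ)⁻¹ * β3)
      (((Real.sqrt (‖β1‖ ^ 2 + ‖β2‖ ^ 2 + ‖β3‖ ^ 2) : ℝ) : ℂ)⁻¹ * β1)
      (mul_ne_zero hc h2) (mul_ne_zero hc h3) _ ?_
    intro x y
    simp only [ptraceFst, proj, Matrix.vecMulVec_apply, Pi.star_apply, RCLike.star_def,
      Fin.sum_univ_two]
    norm_num
    ring
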